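/- If a group A is the union of three proper subgroups A₁, A₂, A₃, then A₁ ∩ A₂ = A₁ ∩ A₃ = A₂ ∩ A₃, this common intersection is a normal subgroup of A, and the quotient A/(A₁ ∩ A₂) is isomorphic to the Klein four-group. -/
import Mathlib

private lemma two_cover' {A : Type*} [Group A] {B C : Subgroup A}
    (h : ∀ x : A, x ∈ B ∨ x ∈ C) : B = ⊤ ∨ C = ⊤ := by
  by_cases hB : B = ⊤
  · exact Or.inl hB
  · right
    obtain ⟨u, hu⟩ : ∃ u : A, u ∉ B := by
      by_contra hc; push_neg at hc
      exact hB ((Subgroup.eq_top_iff' B).mpr hc)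
    have huC : u ∈ C := (h u).resolve_left hu
    rw [Subgroup.eq_top_iff']
    intro v
    rcases h v with hv | hv
    · rcases h (u * v) with huv | huv
      · exact absurd (by simpa using mul_mem huv (inv_mem hv)) hu
      · simpa using mul_mem (inv_mem huC) huv
    · exact hv

private lemma exists_only' {A : Type*} [Group A] {B₁ B₂ B₃ : Subgroup A}
    (cov : ∀ x : A, x ∈ B₁ ∨ x ∈ B₂ ∨ x ∈ B₃)
    (h2 : B₂ ≠ ⊤) (h3 : B₃ ≠ ⊤) :
    ∃ a : A, a ∈ B₁ ∧ a ∉ B₂ ∧ a ∉ B₃ := by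
  by_contra hc
  push_neg at hc
  have hall : ∀ x : A, x ∈ B₂ ∨ x ∈ B₃ := by
    intro x
    rcases cov x with h | h | h
    · by_cases hx2 : x ∈ B₂
      · exact Or.inl hx2
      · exact Or.inr (hc x h hx2)
    · exact Or.inl h
    · exact Or.inr h
  rcases two_cover' hall with h | h
  · exact h2 h
  · exact h3 h

private lemma inter_sub' {A : Type*} [Group A] {B₁ B₂ B₃ : Subgroup A}
    (cov : ∀ x : A, x ∈ B₁ ∨ x ∈ B₂ ∨ x ∈ B₃)
    (h1 : B₁ ≠ ⊤) (h2 : B₂ ≠ ⊤) (h3 : B₃ ≠ ⊤) :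
    ∀ x : A, x ∈ B₁ → x ∈ B₂ → x ∈ B₃ := by
  obtain ⟨a, ha1, ha2, ha3⟩ := exists_only' cov h2 h3
  obtain ⟨b, hb2, hb1, hb3⟩ :=
    exists_only' (B₁ := B₂) (B₂ := B₁) (B₃ := B₃) (fun x => by have := cov x; tauto) h1 h3
  intro x hx1 hx2
  have hab : a * b ∈ B₃ := by
    rcases cov (a * b) with h | h | h
    · exact absurd (by simpa using mul_mem (inv_mem ha1) h) hb1
    · exact absurd (by simpa using mul_mem h (inv_mem hb2)) ha2
    · exact h
  have habx : a * (b * x) ∈ B₃ := by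
    rcases cov (a * (b * x)) with h | h | h
    · have hbx : b * x ∈ B₁ := by simpa using mul_mem (inv_mem ha1) h
      exact absurd (by simpa using mul_mem hbx (inv_mem hx1)) hb1
    · have hbx : b * x ∈ B₂ := mul_mem hb2 hx2
      exact absurd ((mul_mem_cancel_right hbx).mp h) ha2
    · exact h
  have hx := mul_mem (inv_mem hab) habx
  rwa [show (a * b)⁻¹ * (a * (b * x)) = x by group] at hx

private lemma mul_mem_of_not' {A : Type*} [Group A] {B₁ B₂ B₃ : Subgroup A}
    (cov : ∀ x : A, x ∈ B₁ ∨ x ∈ B₂ ∨ x ∈ B₃)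
    (h1 : B₁ ≠ ⊤) (h2 : B₂ ≠ ⊤) (h3 : B₃ ≠ ⊤) :
    ∀ x y : A, x ∉ B₁ → y ∉ B₁ → x * y ∈ B₁ := by
  obtain ⟨a, ha1, ha2, ha3⟩ := exists_only' cov h2 h3
  obtain ⟨b, hb2, hb1, hb3⟩ :=
    exists_only' (B₁ := B₂) (B₂ := B₁) (B₃ := B₃) (fun x => by have := cov x; tauto) h1 h3
  have i23 : ∀ z : A, z ∈ B₂ → z ∈ B₃ → z ∈ B₁ :=
    inter_sub' (B₁ := B₂) (B₂ := B₃) (B₃ := B₁) (fun x => by have := cov x; tauto) h2 h3 h1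
  intro x y hx hy
  by_cases hx2 : x ∈ B₂ <;> by_cases hy2 : y ∈ B₂
  · -- x, y ∈ B₂ \ B₁
    by_contra hxy
    have hxy2 : x * y ∈ B₂ := mul_mem hx2 hy2
    have hax : a * x ∈ B₃ := by
      rcases cov (a * x) with h | h | h
      · exact absurd (by simpa using mul_mem (inv_mem ha1) h) hx
      · exact absurd (by simpa using mul_mem h (inv_mem hx2)) ha2
      · exact h
    have haxy : a * (x * y) ∈ B₃ := by
      rcases cov (a * (x * y)) with h | h | h
      · exact absurd (by simpa using mul_mem (inv_mem ha1) h) hxy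
      · exact absurd ((mul_mem_cancel_right hxy2).mp h) ha2
      · exact h
    have hy3 := mul_mem (inv_mem hax) haxy
    rw [show (a * x)⁻¹ * (a * (x * y)) = y by group] at hy3
    exact hy (i23 y hy2 hy3)
  · -- x ∈ B₂, y ∉ B₂ so y ∈ B₃
    have hy3 : y ∈ B₃ := by rcases cov y with h | h | h <;> tauto
    have hx3 : x ∉ B₃ := fun h => hx (i23 x hx2 h)
    rcases cov (x * y) with h | h | h
    · exact h
    · exact absurd (by simpa using mul_mem (inv_mem hx2) h) hy2
    · exact absurd (by simpa using mul_mem h (inv_mem hy3)) hx3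
  · -- x ∉ B₂ so x ∈ B₃, y ∈ B₂
    have hx3 : x ∈ B₃ := by rcases cov x with h | h | h <;> tauto
    have hy3 : y ∉ B₃ := fun h => hy (i23 y hy2 h)
    rcases cov (x * y) with h | h | h
    · exact h
    · exact absurd (by simpa using mul_mem h (inv_mem hy2)) hx2
    · exact absurd (by simpa using mul_mem (inv_mem hx3) h) hy3
  · -- x, y ∈ B₃ \ (B₁ ∪ B₂)
    have hx3 : x ∈ B₃ := by rcases cov x with h | h | h <;> tauto
    have hy3 : y ∈ B₃ := by rcases cov y with h | h | h <;> tauto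
    by_contra hxy
    have hxy3 : x * y ∈ B₃ := mul_mem hx3 hy3
    have hxy2 : x * y ∉ B₂ := fun h => hxy (i23 _ h hxy3)
    have hbx : b * x ∈ B₁ := by
      rcases cov (b * x) with h | h | h
      · exact h
      · exact absurd (by simpa using mul_mem (inv_mem hb2) h) hx2
      · exact absurd (by simpa using mul_mem h (inv_mem hx3)) hb3
    have hbxy : b * (x * y) ∈ B₁ := by
      rcases cov (b * (x * y)) with h | h | h
      · exact h
      · exact absurd (by simpa using mul_mem (inv_mem hb2) h) hxy2
      · exact absurd ((mul_mem_cancel_right hxy3).mp h) hb3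
    have hy1 := mul_mem (inv_mem hbx) hbxy
    rw [show (b * x)⁻¹ * (b * (x * y)) = y by group] at hy1
    exact hy hy1

theorem stmt_2 {A : Type*} [Group A] (A₁ A₂ A₃ : Subgroup A)
    (h1 : A₁ ≠ ⊤) (h2 : A₂ ≠ ⊤) (h3 : A₃ ≠ ⊤)
    (hcover : (A₁ : Set A) ∪ (A₂ : Set A) ∪ (A₃ : Set A) = Set.univ) :
    A₁ ⊓ A₂ = A₁ ⊓ A₃ ∧ A₁ ⊓ A₂ = A₂ ⊓ A₃ ∧
    ∃ hn : (A₁ ⊓ A₂).Normal,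
      Nonempty (letI := hn; (A ⧸ (A₁ ⊓ A₂)) ≃* Multiplicative (ZMod 2 × ZMod 2)) := by
  classical
  have cov : ∀ x : A, x ∈ A₁ ∨ x ∈ A₂ ∨ x ∈ A₃ := by
    intro x
    have hx := Set.eq_univ_iff_forall.mp hcover x
    simpa [or_assoc] using hx
  have i123 : ∀ x : A, x ∈ A₁ → x ∈ A₂ → x ∈ A₃ := inter_sub' cov h1 h2 h3
  have i132 : ∀ x : A, x ∈ A₁ → x ∈ A₃ → x ∈ A₂ :=
    inter_sub' (B₁ := A₁) (B₂ := A₃) (B₃ := A₂) (fun x => by have := cov x; tauto) h1 h3 h2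
  have i231 : ∀ x : A, x ∈ A₂ → x ∈ A₃ → x ∈ A₁ :=
    inter_sub' (B₁ := A₂) (B₂ := A₃) (B₃ := A₁) (fun x => by have := cov x; tauto) h2 h3 h1
  have eq1 : A₁ ⊓ A₂ = A₁ ⊓ A₃ := by
    ext x
    simp only [Subgroup.mem_inf]
    exact ⟨fun ⟨u, v⟩ => ⟨u, i123 x u v⟩, fun ⟨u, v⟩ => ⟨u, i132 x u v⟩⟩
  have eq2 : A₁ ⊓ A₂ = A₂ ⊓ A₃ := by
    ext x
    simp only [Subgroup.mem_inf]
    exact ⟨fun ⟨u, v⟩ => ⟨v, i123 x u v⟩, fun ⟨u, v⟩ => ⟨i231 x u v, u⟩⟩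
  have M1 : ∀ x y : A, x ∉ A₁ → y ∉ A₁ → x * y ∈ A₁ := mul_mem_of_not' cov h1 h2 h3
  have M2 : ∀ x y : A, x ∉ A₂ → y ∉ A₂ → x * y ∈ A₂ :=
    mul_mem_of_not' (B₁ := A₂) (B₂ := A₁) (B₃ := A₃) (fun x => by have := cov x; tauto) h2 h1 h3
  obtain ⟨a, ha1, ha2, ha3⟩ := exists_only' cov h2 h3
  obtain ⟨b, hb2, hb1, hb3⟩ :=
    exists_only' (B₁ := A₂) (B₂ := A₁) (B₃ := A₃) (fun x => by have := cov x; tauto) h1 h3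
  -- key componentwise additivity
  have key : ∀ (H : Subgroup A), (∀ u v : A, u ∉ H → v ∉ H → u * v ∈ H) →
      ∀ x y : A, (if x * y ∈ H then (0 : ZMod 2) else 1) =
        (if x ∈ H then 0 else 1) + (if y ∈ H then 0 else 1) := by
    intro H hH x y
    by_cases hx : x ∈ H <;> by_cases hy : y ∈ H
    · simp [hx, hy, mul_mem hx hy]
    · have hxy : x * y ∉ H := fun h => hy (by simpa using mul_mem (inv_mem hx) h)
      simp [hx, hy, hxy]
    · have hxy : x * y ∉ H := fun h => hx (by simpa using mul_mem h (inv_mem hy))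
      simp [hx, hy, hxy]
    · have hxy := hH x y hx hy
      simp only [hx, hy, hxy, if_true, if_false, if_neg]
      decide
  set f : A →* Multiplicative (ZMod 2 × ZMod 2) :=
    MonoidHom.mk' (fun x => Multiplicative.ofAdd
      ((if x ∈ A₁ then (0 : ZMod 2) else 1), (if x ∈ A₂ then (0 : ZMod 2) else 1)))
      (by
        intro x y
        rw [← ofAdd_add]
        exact congrArg Multiplicative.ofAdd
          (Prod.ext (key A₁ M1 x y) (key A₂ M2 x y))) with hf
  have hfx : ∀ x : A, f x = Multiplicative.ofAdd
      ((if x ∈ A₁ then (0 : ZMod 2) else 1), (if x ∈ A₂ then (0 : ZMod 2) else 1)) :=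
    fun x => rfl
  have hker : MonoidHom.ker f = A₁ ⊓ A₂ := by
    ext x
    rw [MonoidHom.mem_ker, hfx x, Subgroup.mem_inf]
    constructor
    · intro h
      by_cases hx1 : x ∈ A₁ <;> by_cases hx2 : x ∈ A₂ <;>
        simp_all [Prod.ext_iff]
    · rintro ⟨hx1, hx2⟩
      simp [hx1, hx2]
  have hsurj : Function.Surjective f := by
    intro c
    have hz : ∀ z : ZMod 2, z = 0 ∨ z = 1 := by decide
    have hab1 : a * b ∉ A₁ := fun h => hb1 (by simpa using mul_mem (inv_mem ha1) h)
    have hab2 : a * b ∉ A₂ := fun h => ha2 (by simpa using mul_mem h (inv_mem hb2))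
    have hc : c = Multiplicative.ofAdd
        ((Multiplicative.toAdd c).1, (Multiplicative.toAdd c).2) := by
      simp
    rcases hz (Multiplicative.toAdd c).1 with hc1 | hc1 <;>
      rcases hz (Multiplicative.toAdd c).2 with hc2 | hc2
    · exact ⟨1, by rw [hc, hc1, hc2, hfx 1]; simp [one_mem]⟩
    · exact ⟨a, by rw [hc, hc1, hc2, hfx a]; simp [ha1, ha2]⟩
    · exact ⟨b, by rw [hc, hc1, hc2, hfx b]; simp [hb1, hb2]⟩
    · exact ⟨a * b, by rw [hc, hc1, hc2, hfx (a * b)]; simp [hab1, hab2]⟩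
  have hn : (A₁ ⊓ A₂).Normal := hker ▸ f.normal_ker
  refine ⟨eq1, eq2, hn, ?_⟩
  have e := QuotientGroup.quotientKerEquivOfSurjective f hsurj
  exact ⟨(QuotientGroup.quotientMulEquivOfEq hker).symm.trans e⟩
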